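/- Multi-step extension lemma: let S₁, S₂ ⊆ Σ with C = S₁ ∩ S₂, and suppose S₂ \ S₁ is infinite. Let M₁, γ₁ be substitutions into S₁ with disjoint domains and M₂ a substitution into S₂ with M₁ ⋈_C M₂. Then there exists a substitution γ₂ into S₂ with dom(γ₂) = dom(γ₁) such that (M₁ ⊎ γ₁) ⋈_C (M₂ ⊎ γ₂). (Proved by induction on |dom(γ₁)|, extending one variable at a time.) -/

import Mathlib

noncomputable section
open Classical

/-- A substitution: a partial map from variables to letters. -/
def dom {X A : Type*} (σ : X → Option A) : Set X := {x | σ x ≠ none}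

def codom {X A : Type*} (σ : X → Option A) : Set A := {a | ∃ x, σ x = some a}

/-- C-coherence of two substitutions with equal domains. -/
def Coh {X A : Type*} (C : Set A) (σ' σ : X → Option A) : Prop :=
  dom σ' = dom σ ∧
  (∀ x a b, σ' x = some a → σ x = some b →
      (a ∈ C ↔ b ∈ C) ∧ ((a ∈ C ∨ b ∈ C) → a = b)) ∧
  (∀ x y a b a' b', σ' x = some a → σ' y = some b →
      σ x = some a' → σ y = some b' → (a = b ↔ a' = b'))

/-- Union of two substitutions (intended for disjoint domains). -/
def union {X A : Type*} (σ γ : X → Option A) : X → Option A :=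
  fun x => match σ x with | some a => some a | none => γ x

/-- Restriction of a substitution to a set of variables. -/
def restrict {X A : Type*} (σ : X → Option A) (D : Set X) : X → Option A :=
  fun x => if x ∈ D then σ x else none

/-- The singleton substitution {x ↦ a}. -/
def single {X A : Type*} (x : X) (a : A) : X → Option A :=
  fun z => if z = x then some a else none

/-- Multi-step extension lemma. -/
theorem stmt_13 {X A : Type*} (S₁ S₂ : Set A) (C : Set A) (hC : C = S₁ ∩ S₂)
    (hinf : (S₂ \ S₁).Infinite)
    (M₁ γ₁ M₂ : X → Option A)
    (hM₁ : codom M₁ ⊆ S₁) (hγ₁ : codom γ₁ ⊆ S₁) (hM₂ : codom M₂ ⊆ S₂)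
    (hdisj : dom M₁ ∩ dom γ₁ = ∅)
    (hfinM : (dom M₁).Finite) (hfinγ : (dom γ₁).Finite)
    (hcoh : Coh C M₁ M₂) :
    ∃ γ₂ : X → Option A, dom γ₂ = dom γ₁ ∧ codom γ₂ ⊆ S₂ ∧
      Coh C (union M₁ γ₁) (union M₂ γ₂) := by
  classical
  obtain ⟨hdom, hC2, hC3⟩ := hcoh
  -- finite codomains
  have hcodomfin : ∀ (σ : X → Option A), (dom σ).Finite → (codom σ).Finite := by
    intro σ hσ
    obtain ⟨a₀, _⟩ := hinf.nonempty
    have hsub : codom σ ⊆ (fun x => (σ x).getD a₀) '' dom σ := by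
      rintro a ⟨x, hx⟩
      exact ⟨x, by simp [dom, hx], by simp [hx]⟩
    exact (hσ.image _).subset hsub
  have hdomM₂ : dom M₂ = dom M₁ := hdom.symm
  have hfinM₂ : (codom M₂).Finite := hcodomfin M₂ (hdomM₂ ▸ hfinM)
  -- the matching relation
  set P : A → A → Prop := fun a b => ∃ x, M₁ x = some a ∧ M₂ x = some b with hPdef
  have hM₂some : ∀ x a, M₁ x = some a → ∃ b, M₂ x = some b := by
    intro x a hx
    have hxd : x ∈ dom M₂ := by rw [hdomM₂]; simp [dom, hx]
    cases h : M₂ x with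
    | none => exact absurd h hxd
    | some b => exact ⟨b, rfl⟩
  have hkey : ∀ a b x, P a b → M₁ x = some a → M₂ x = some b := by
    rintro a b x ⟨y, hy1, hy2⟩ hx
    obtain ⟨b', hb'⟩ := hM₂some x a hx
    have h3 := hC3 x y a a b' b hx hy1 hb' hy2
    rw [hb', h3.mp rfl]
  -- fresh elements
  set T : Set A := (S₂ \ S₁) \ codom M₂ with hTdef
  have hTinf : T.Infinite := hinf.diff hfinM₂
  haveI : Infinite T := hTinf.to_subtype
  set D : Set A := codom γ₁ \ (codom M₁ ∪ C) with hDdef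
  have hDfin : D.Finite := (hcodomfin γ₁ hfinγ).diff
  haveI : Countable D := hDfin.countable
  obtain ⟨j, hj⟩ := Countable.exists_injective_nat D
  set e : ℕ ↪ T := Infinite.natEmbedding T with hedef
  -- the letter renaming
  set f : A → A := fun a =>
    if h : ∃ b, P a b then Classical.choose h
    else if a ∈ C then a
    else if h : a ∈ D then (e (j ⟨a, h⟩) : A) else a with hfdef
  -- characterizations of f
  have hcase1 : ∀ a, a ∈ codom M₁ → P a (f a) := by
    rintro a ⟨x, hx⟩
    obtain ⟨b, hb⟩ := hM₂some x a hx
    have h : ∃ b, P a b := ⟨b, x, hx, hb⟩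
    simp only [hfdef, dif_pos h]
    exact Classical.choose_spec h
  have hnotM : ∀ a, a ∉ codom M₁ → ¬ ∃ b, P a b := by
    rintro a ha ⟨b, x, hx, -⟩; exact ha ⟨x, hx⟩
  have hcase2 : ∀ a, a ∉ codom M₁ → a ∈ C → f a = a := by
    intro a ha haC
    simp only [hfdef, dif_neg (hnotM a ha), if_pos haC]
  have hcase3 : ∀ a (h : a ∈ D), f a = (e (j ⟨a, h⟩) : A) := by
    intro a h
    have ha : a ∉ codom M₁ := fun hm => h.2 (Or.inl hm)
    have haC : a ∉ C := fun hc => h.2 (Or.inr hc)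
    simp only [hfdef, dif_neg (hnotM a ha), if_neg haC, dif_pos h]
  have hfM : ∀ x a, M₁ x = some a → M₂ x = some (f a) := by
    intro x a hx
    exact hkey a (f a) x (hcase1 a ⟨x, hx⟩) hx
  -- membership facts
  have hmemD : ∀ a, a ∈ codom M₁ ∪ codom γ₁ → a ∉ codom M₁ → a ∉ C → a ∈ D := by
    intro a ha h1 h2
    rcases ha with h | h
    · exact absurd h h1
    · exact ⟨h, fun h' => h'.elim h1 h2⟩
  have hTprop : ∀ a (h : a ∈ D), f a ∈ T := by
    intro a h; rw [hcase3 a h]; exact (e (j ⟨a, h⟩)).2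
  -- key properties of f on E := codom M₁ ∪ codom γ₁
  have hCiff : ∀ a, a ∈ codom M₁ ∪ codom γ₁ →
      (a ∈ C ↔ f a ∈ C) ∧ ((a ∈ C ∨ f a ∈ C) → a = f a) := by
    intro a ha
    by_cases h1 : a ∈ codom M₁
    · obtain ⟨x, hx1, hx2⟩ := hcase1 a h1
      exact hC2 x a (f a) hx1 hx2
    · by_cases h2 : a ∈ C
      · rw [hcase2 a h1 h2]; exact ⟨Iff.rfl, fun _ => rfl⟩
      · have hD := hmemD a ha h1 h2
        have hT := hTprop a hD
        have : f a ∉ C := by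
          intro hc; rw [hC] at hc; exact hT.1.2 hc.1
        exact ⟨by tauto, by tauto⟩
  have hfS₂ : ∀ a, a ∈ codom M₁ ∪ codom γ₁ → f a ∈ S₂ := by
    intro a ha
    by_cases h1 : a ∈ codom M₁
    · obtain ⟨x, hx1, hx2⟩ := hcase1 a h1
      exact hM₂ ⟨x, hx2⟩
    · by_cases h2 : a ∈ C
      · rw [hcase2 a h1 h2, hC] at *; exact h2.2
      · exact (hTprop a (hmemD a ha h1 h2)).1.1
  have hinj : ∀ a b, a ∈ codom M₁ ∪ codom γ₁ → b ∈ codom M₁ ∪ codom γ₁ →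
      f a = f b → a = b := by
    intro a b ha hb hfab
    have hM₂mem : ∀ c, c ∈ codom M₁ → f c ∈ codom M₂ := by
      intro c hc; obtain ⟨x, hx1, hx2⟩ := hcase1 c hc; exact ⟨x, hx2⟩
    by_cases h1 : a ∈ codom M₁
    · by_cases h1' : b ∈ codom M₁
      · obtain ⟨x, hx1, hx2⟩ := hcase1 a h1
        obtain ⟨y, hy1, hy2⟩ := hcase1 b h1'
        exact (hC3 x y a b (f a) (f b) hx1 hy1 hx2 hy2).mpr hfab
      · by_cases h2' : b ∈ C
        · -- f b = b ∈ C, so f a ∈ C, so a = f a = b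
          have hb' := hcase2 b h1' h2'
          have : f a ∈ C := by rw [hfab, hb']; exact h2'
          have := (hCiff a ha).2 (Or.inr this)
          rw [this, hfab, hb']
        · -- f b fresh, not in codom M₂, but f a ∈ codom M₂
          have hD := hmemD b hb h1' h2'
          have := hTprop b hD
          exact absurd (hfab ▸ hM₂mem a h1) this.2
    · by_cases h2 : a ∈ C
      · have ha' := hcase2 a h1 h2
        by_cases h1' : b ∈ codom M₁
        · have : f b ∈ C := by rw [← hfab, ha']; exact h2
          have := (hCiff b hb).2 (Or.inr this)
          rw [this, ← hfab, ha']
        · by_cases h2' : b ∈ C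
          · rw [← ha', ← hcase2 b h1' h2', hfab]
          · have hD := hmemD b hb h1' h2'
            have hT := hTprop b hD
            have : f b ∈ C := by rw [← hfab, ha']; exact h2
            rw [hC] at this; exact absurd this.1 hT.1.2
      · have hD := hmemD a ha h1 h2
        have hTa := hTprop a hD
        by_cases h1' : b ∈ codom M₁
        · exact absurd (hfab ▸ hM₂mem b h1') (hfab ▸ hTa.2)
        · by_cases h2' : b ∈ C
          · have hb' := hcase2 b h1' h2'
            have : f a ∈ C := by rw [hfab, hb']; exact h2'
            rw [hC] at this; exact absurd this.1 hTa.1.2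
          · have hD' := hmemD b hb h1' h2'
            rw [hcase3 a hD, hcase3 b hD'] at hfab
            have := e.injective (Subtype.ext hfab)
            have := hj (by simpa using this)
            exact congrArg Subtype.val this
  -- define γ₂
  refine ⟨fun x => Option.map f (γ₁ x), ?_, ?_, ?_, ?_, ?_⟩
  · ext x; simp [dom, Option.map_eq_none_iff]
  · rintro b ⟨x, hx⟩
    rw [Option.map_eq_some_iff] at hx
    obtain ⟨a, ha, rfl⟩ := hx
    exact hfS₂ a (Or.inr ⟨x, ha⟩)
  all_goals {
    have hu : ∀ x, union M₂ (fun x => Option.map f (γ₁ x)) x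
        = Option.map f (union M₁ γ₁ x) := by
      intro x
      cases h : M₁ x with
      | some a =>
        have h2 := hfM x a h
        simp [union, h, h2]
      | none =>
        have h2 : M₂ x = none := by
          by_contra hne
          have : x ∈ dom M₂ := hne
          rw [hdomM₂] at this; exact this h
        simp [union, h, h2]
    have hmemE : ∀ x a, union M₁ γ₁ x = some a → a ∈ codom M₁ ∪ codom γ₁ := by
      intro x a hxa
      unfold union at hxa
      cases h : M₁ x with
      | some c => rw [h] at hxa; exact Or.inl ⟨x, h.trans hxa⟩
      | none => rw [h] at hxa; exact Or.inr ⟨x, hxa⟩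
    first
    | · ext x
        simp only [dom, Set.mem_setOf_eq, hu x]
        cases union M₁ γ₁ x <;> simp
    | · intro x a b hxa hxb
        rw [hu x, hxa] at hxb
        simp only [Option.map_some] at hxb
        obtain rfl : f a = b := Option.some.inj hxb
        have h := hCiff a (hmemE x a hxa)
        exact ⟨h.1, fun hor => h.2 hor⟩
    | · intro x y a b a' b' hxa hyb hxa' hyb'
        rw [hu x, hxa] at hxa'
        rw [hu y, hyb] at hyb'
        obtain rfl : f a = a' := Option.some.inj (by simpa using hxa')
        obtain rfl : f b = b' := Option.some.inj (by simpa using hyb')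
        constructor
        · intro h; rw [h]
        · intro h; exact hinj a b (hmemE x a hxa) (hmemE y b hyb) h
  }
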